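/- Let A be a lower semibounded self-adjoint operator with simple lowest eigenvalue Λ₀ and normalized eigenvector Ψ₀, and let B be a bounded symmetric operator. Then the lowest point of the spectrum of A + ηB satisfies Λ(η) ≤ Λ₀ + η⟨BΨ₀, Ψ₀⟩ + η²‖B‖² / γ, for all η, where γ > 0 is the distance from Λ₀ to the rest of the spectrum of A. In particular, if Λ₁ := ⟨BΨ₀, Ψ₀⟩ < 0, then for all sufficiently small η > 0 one has Λ(η) < Λ₀. -/

import Mathlib

open scoped ComplexInnerProductSpace

lemma sInf_spectrum_le_inner
    {H : Type*} [NormedAddCommGroup H] [InnerProductSpace ℂ H] [CompleteSpace H]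
    (T : H →L[ℂ] H) (hT : IsSelfAdjoint T) (u : H) (hu : ‖u‖ = 1) :
    sInf (spectrum ℝ T) ≤ (⟪T u, u⟫).re := by
  have hu0 : u ≠ 0 := by intro h; simp [h] at hu
  have : Nontrivial H := ⟨u, 0, hu0⟩
  have hne : (spectrum ℝ T).Nonempty := hT.spectrum_nonempty
  have hbdd : BddBelow (spectrum ℝ T) := (spectrum.isBounded T).bddBelow
  set r := sInf (spectrum ℝ T) with hr
  have hle : algebraMap ℝ (H →L[ℂ] H) r ≤ T :=
    (algebraMap_le_iff_le_spectrum (a := T) hT).2 fun x hx => csInf_le hbdd hx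
  have hpos : (T - algebraMap ℝ (H →L[ℂ] H) r).IsPositive := by
    rw [← ContinuousLinearMap.nonneg_iff_isPositive]
    exact sub_nonneg.2 hle
  have h0 := hpos.inner_nonneg_left u
  have happ : (T - algebraMap ℝ (H →L[ℂ] H) r) u = T u - r • u := by
    simp [Algebra.algebraMap_eq_smul_one]
  rw [happ] at h0
  have hinner : ⟪T u - r • u, u⟫ = ⟪T u, u⟫ - (r : ℂ) := by
    rw [inner_sub_left, RCLike.real_smul_eq_coe_smul (K := ℂ), inner_smul_left]
    simp [inner_self_eq_norm_sq_to_K, hu]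
  rw [hinner] at h0
  have h0 := (Complex.le_def.mp h0).1
  simp at h0
  linarith

set_option maxHeartbeats 1000000 in
/-- Second-order perturbation bound for the bottom of the spectrum: if `A` is self-adjoint
with simple lowest eigenvalue `Λ₀` (normalized eigenvector `Ψ₀`) and spectral gap `γ`, and
`B` is bounded self-adjoint, then `inf σ(A + ηB) ≤ Λ₀ + η⟨BΨ₀,Ψ₀⟩ + η²‖B‖²/γ` for all `η`;
in particular if `Λ₁ = ⟨BΨ₀,Ψ₀⟩ < 0` then `inf σ(A + ηB) < Λ₀` for all small `η > 0`. -/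
theorem ground_state_second_order_upper_bound
    {H : Type*} [NormedAddCommGroup H] [InnerProductSpace ℂ H] [CompleteSpace H]
    (A B : H →L[ℂ] H) (hA : IsSelfAdjoint A) (hB : IsSelfAdjoint B)
    (Λ₀ : ℝ) (hΛ₀ : Λ₀ = sInf (spectrum ℝ A)) (hΛ₀mem : Λ₀ ∈ spectrum ℝ A)
    (Ψ₀ : H) (hΨ₀ : ‖Ψ₀‖ = 1) (heig : A Ψ₀ = (Λ₀ : ℂ) • Ψ₀)
    (hsimple : ∀ v : H, A v = (Λ₀ : ℂ) • v → ∃ c : ℂ, v = c • Ψ₀)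
    (γ : ℝ) (hγ : γ = Metric.infDist Λ₀ (spectrum ℝ A \ {Λ₀})) (hγpos : 0 < γ)
    (Λ : ℝ → ℝ) (hΛ : ∀ η : ℝ, Λ η = sInf (spectrum ℝ (A + (η : ℂ) • B))) :
    (∀ η : ℝ, Λ η ≤ Λ₀ + η * (⟪B Ψ₀, Ψ₀⟫).re + η ^ 2 * ‖B‖ ^ 2 / γ) ∧
    ((⟪B Ψ₀, Ψ₀⟫).re < 0 →
      ∃ η₀ > 0, ∀ η : ℝ, 0 < η → η ≤ η₀ → Λ η < Λ₀) := by
  have key : ∀ η : ℝ, Λ η ≤ Λ₀ + η * (⟪B Ψ₀, Ψ₀⟫).re := by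
    intro η
    have hsB : IsSelfAdjoint ((η : ℂ) • B) := by
      rw [IsSelfAdjoint, star_smul, hB.star_eq, Complex.star_def, Complex.conj_ofReal]
    have hTsa : IsSelfAdjoint (A + (η : ℂ) • B) := hA.add hsB
    have h := sInf_spectrum_le_inner (A + (η : ℂ) • B) hTsa Ψ₀ hΨ₀
    rw [hΛ η]
    refine h.trans_eq ?_
    have hi : ⟪(A + (η : ℂ) • B) Ψ₀, Ψ₀⟫ = (Λ₀ : ℂ) + (η : ℂ) * ⟪B Ψ₀, Ψ₀⟫ := by
      rw [ContinuousLinearMap.add_apply, ContinuousLinearMap.smul_apply,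
        inner_add_left, heig, inner_smul_left, inner_smul_left,
        inner_self_eq_norm_sq_to_K]
      simp [Complex.conj_ofReal, hΨ₀]
    rw [hi]
    simp
  refine ⟨fun η => ?_, fun hneg => ⟨1, one_pos, fun η hη _ => ?_⟩⟩
  · have h2 : 0 ≤ η ^ 2 * ‖B‖ ^ 2 / γ := by positivity
    linarith [key η]
  · have := key η
    nlinarith
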